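/- Let μ, λ be real numbers with μλ ≠ 0 and such that either (−1 < μ ≤ λ ≤ 1) or (μ = −1 and −1 ≤ λ < 0). Then there exists a derivation of the Lie algebra rh₃ = h₃ × ℝ whose characteristic polynomial is X(X − 1)(X − μ)(X − λ) if and only if at least one of the following holds: μ = −1, λ = μ, λ = −μ, λ = 1, λ = 1 − μ, or λ = 1 + μ. -/

import Mathlib

set_option linter.unusedTactic false
set_option linter.unnecessarySeqFocus false
set_option linter.unreachableTactic false

open Polynomial

/-- The 3-dimensional Heisenberg Lie algebra `h₃`: the real vector space `Fin 3 → ℝ`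
with basis `e₁, e₂, e₃` and only nonzero bracket `⁅e₁, e₂⁆ = e₃`. -/
def H3 : Type := Fin 3 → ℝ

noncomputable instance : AddCommGroup H3 := Pi.addCommGroup
noncomputable instance : Module ℝ H3 := Pi.module _ _ _
instance : FiniteDimensional ℝ H3 := inferInstanceAs (FiniteDimensional ℝ (Fin 3 → ℝ))

lemma H3.add_apply (x y : H3) (i : Fin 3) : (x + y) i = x i + y i := rfl
lemma H3.smul_apply (r : ℝ) (x : H3) (i : Fin 3) : (r • x) i = r * x i := rfl

noncomputable instance : LieRing H3 :=
  { (inferInstance : AddCommGroup H3) with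
    bracket := fun x y => ![0, 0, x 0 * y 1 - x 1 * y 0]
    add_lie := by
      intro x y z
      show (![_,_,_] : Fin 3 → ℝ) = ![_,_,_] + ![_,_,_]
      funext i
      fin_cases i <;> simp [H3.add_apply] <;> (try erw [H3.add_apply]) <;> simp <;> ring
    lie_add := by
      intro x y z
      show (![_,_,_] : Fin 3 → ℝ) = ![_,_,_] + ![_,_,_]
      funext i
      fin_cases i <;> simp [H3.add_apply] <;> (try erw [H3.add_apply]) <;> simp <;> ring
    lie_self := by
      intro x
      show (![_,_,_] : Fin 3 → ℝ) = 0
      funext i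
      fin_cases i <;> simp <;> ring
    leibniz_lie := by
      intro x y z
      show (![_,_,_] : Fin 3 → ℝ) = ![_,_,_] + ![_,_,_]
      funext i
      fin_cases i <;> simp [H3.add_apply] <;> (try erw [H3.add_apply]) <;> simp <;> ring }

noncomputable instance : LieAlgebra ℝ H3 :=
  { lie_smul := by
      intro r x y
      show (![_,_,_] : Fin 3 → ℝ) = r • ![_,_,_]
      funext i
      fin_cases i <;> simp [H3.smul_apply] <;> (try erw [H3.smul_apply]) <;> simp <;> ring }

/-- `rh₃ := h₃ × ℝ`, the product Lie algebra of the Heisenberg Lie algebra `h₃` with the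
1-dimensional abelian Lie algebra `ℝ`. -/
def RH3 : Type := H3 × ℝ

noncomputable instance : AddCommGroup RH3 := inferInstanceAs (AddCommGroup (H3 × ℝ))
noncomputable instance : Module ℝ RH3 := inferInstanceAs (Module ℝ (H3 × ℝ))
instance : FiniteDimensional ℝ RH3 := inferInstanceAs (FiniteDimensional ℝ (H3 × ℝ))

noncomputable instance : LieRing RH3 :=
  { (inferInstance : AddCommGroup RH3) with
    bracket := fun x y => (⁅x.1, y.1⁆, 0)
    add_lie := by
      intro x y z
      show (⁅x.1 + y.1, z.1⁆, (0:ℝ)) = (⁅x.1, z.1⁆ + ⁅y.1, z.1⁆, 0 + 0)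
      simp [add_lie]
    lie_add := by
      intro x y z
      show (⁅x.1, y.1 + z.1⁆, (0:ℝ)) = (⁅x.1, y.1⁆ + ⁅x.1, z.1⁆, 0 + 0)
      simp [lie_add]
    lie_self := by
      intro x
      show (⁅x.1, x.1⁆, (0:ℝ)) = (0, 0)
      simp
    leibniz_lie := by
      intro x y z
      show (⁅x.1, ⁅y.1, z.1⁆⁆, (0:ℝ)) = (⁅⁅x.1, y.1⁆, z.1⁆ + ⁅y.1, ⁅x.1, z.1⁆⁆, 0 + 0)
      rw [← leibniz_lie]
      simp }

noncomputable instance : LieAlgebra ℝ RH3 :=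
  { lie_smul := by
      intro r x y
      show (⁅x.1, r • y.1⁆, (0:ℝ)) = (r • ⁅x.1, y.1⁆, r • (0:ℝ))
      simp }

noncomputable def rhEquiv : RH3 ≃ₗ[ℝ] (Fin 4 → ℝ) where
  toFun p := ![p.1 0, p.1 1, p.1 2, p.2]
  invFun v := ((![v 0, v 1, v 2] : H3), v 3)
  map_add' p q := by
    funext i
    fin_cases i <;> rfl
  map_smul' r p := by
    funext i
    fin_cases i <;> rfl
  left_inv p := by
    refine Prod.ext ?_ rfl
    funext i
    fin_cases i <;> rfl
  right_inv v := by
    funext i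
    fin_cases i <;> rfl

noncomputable def rhBasis : Module.Basis (Fin 4) ℝ RH3 := Module.Basis.ofEquivFun rhEquiv

lemma rhEquiv_basis (j i : Fin 4) : rhEquiv (rhBasis j) i = if j = i then 1 else 0 := by
  rw [← Module.Basis.ofEquivFun_repr_apply rhEquiv (rhBasis j) i]
  rw [show (Module.Basis.ofEquivFun rhEquiv) = rhBasis from rfl]
  rw [Module.Basis.repr_self_apply]

lemma br_comp0 (x y : RH3) : rhEquiv ⁅x, y⁆ 0 = 0 := rfl
lemma br_comp1 (x y : RH3) : rhEquiv ⁅x, y⁆ 1 = 0 := rfl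
lemma br_comp2 (x y : RH3) :
    rhEquiv ⁅x, y⁆ 2 = rhEquiv x 0 * rhEquiv y 1 - rhEquiv x 1 * rhEquiv y 0 := rfl
lemma br_comp3 (x y : RH3) : rhEquiv ⁅x, y⁆ 3 = 0 := rfl

lemma br_basis01 : ⁅rhBasis 0, rhBasis 1⁆ = rhBasis 2 := by
  apply rhEquiv.injective
  funext i
  fin_cases i <;>
    simp [br_comp0, br_comp1, br_comp2, br_comp3, rhEquiv_basis]

lemma br_basis03 : ⁅rhBasis 0, rhBasis 3⁆ = 0 := by
  apply rhEquiv.injective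
  funext i
  fin_cases i <;>
    simp [br_comp0, br_comp1, br_comp2, br_comp3, rhEquiv_basis]

lemma br_basis13 : ⁅rhBasis 1, rhBasis 3⁆ = 0 := by
  apply rhEquiv.injective
  funext i
  fin_cases i <;>
    simp [br_comp0, br_comp1, br_comp2, br_comp3, rhEquiv_basis]

set_option maxHeartbeats 1600000 in
lemma det4 (a b c d p q e r s t2 w : ℝ[X]) :
    (Matrix.of ![![a,b,0,0],![c,d,0,0],![p,q,e,r],![s,t2,0,w]]).det
      = e * w * (a*d - b*c) := by
  rw [Matrix.det_succ_row_zero]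
  simp [Fin.sum_univ_succ, Matrix.det_fin_three, Fin.succAbove]
  ring

set_option maxHeartbeats 1600000 in
lemma charpoly4 (a b c d p q r s t2 w : ℝ) :
    (Matrix.of ![![a,b,0,0],![c,d,0,0],![p,q,a+d,r],![s,t2,0,w]]).charpoly
      = (X - C (a+d)) * (X - C w) * (X^2 - C (a+d) * X + C (a*d - b*c)) := by
  rw [Matrix.charpoly]
  have h : Matrix.charmatrix (Matrix.of ![![a,b,0,0],![c,d,0,0],![p,q,a+d,r],![s,t2,0,w]])
      = Matrix.of ![![X - C a, -C b, 0, 0], ![-C c, X - C d, 0, 0],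
          ![-C p, -C q, X - C (a+d), -C r], ![-C s, -C t2, 0, X - C w]] := by
    ext i j
    fin_cases i <;> fin_cases j <;>
      simp [Matrix.charmatrix_apply, Matrix.diagonal_apply]
  rw [h, det4]
  simp only [map_add, map_sub, map_mul]
  ring

lemma rhBasis_repr (x : RH3) (i : Fin 4) : rhBasis.repr x i = rhEquiv x i :=
  Module.Basis.ofEquivFun_repr_apply rhEquiv x i

set_option maxHeartbeats 1600000 in
lemma charpoly4' (M : Matrix (Fin 4) (Fin 4) ℝ)
    (h02 : M 0 2 = 0) (h12 : M 1 2 = 0) (h32 : M 3 2 = 0)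
    (h22 : M 2 2 = M 0 0 + M 1 1) (h03 : M 0 3 = 0) (h13 : M 1 3 = 0) :
    M.charpoly = (X - C (M 0 0 + M 1 1)) * (X - C (M 3 3)) *
      (X ^ 2 - C (M 0 0 + M 1 1) * X + C (M 0 0 * M 1 1 - M 0 1 * M 1 0)) := by
  have hM : M = Matrix.of ![![M 0 0, M 0 1, 0, 0], ![M 1 0, M 1 1, 0, 0],
      ![M 2 0, M 2 1, M 0 0 + M 1 1, M 2 3], ![M 3 0, M 3 1, 0, M 3 3]] := by
    ext i j
    fin_cases i <;> fin_cases j <;> simp [h02, h12, h32, h22, h03, h13]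
  rw [hM]
  exact charpoly4 _ _ _ _ _ _ _ _ _ _

lemma derivation_charpoly (D : LieDerivation ℝ RH3 RH3) :
    ∃ t u n : ℝ, LinearMap.charpoly D.toLinearMap
      = (X - C t) * (X - C u) * (X ^ 2 - C t * X + C n) := by
  set M := LinearMap.toMatrix rhBasis rhBasis D.toLinearMap with hMdef
  have mapply : ∀ i j : Fin 4, M i j = rhEquiv (D (rhBasis j)) i := by
    intro i j
    rw [hMdef, LinearMap.toMatrix_apply, rhBasis_repr]
    rfl
  have e00 : rhEquiv (rhBasis 0) 0 = 1 := by rw [rhEquiv_basis]; exact if_pos rfl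
  have e01 : rhEquiv (rhBasis 0) 1 = 0 := by rw [rhEquiv_basis]; exact if_neg (by decide)
  have e10 : rhEquiv (rhBasis 1) 0 = 0 := by rw [rhEquiv_basis]; exact if_neg (by decide)
  have e11 : rhEquiv (rhBasis 1) 1 = 1 := by rw [rhEquiv_basis]; exact if_pos rfl
  have e30 : rhEquiv (rhBasis 3) 0 = 0 := by rw [rhEquiv_basis]; exact if_neg (by decide)
  have e31 : rhEquiv (rhBasis 3) 1 = 0 := by rw [rhEquiv_basis]; exact if_neg (by decide)
  have hD2 : D (rhBasis 2) = ⁅rhBasis 0, D (rhBasis 1)⁆ - ⁅rhBasis 1, D (rhBasis 0)⁆ := by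
    rw [← br_basis01, D.apply_lie_eq_sub]
  have h02 : M 0 2 = 0 := by
    rw [mapply, hD2, map_sub]
    simp only [Pi.sub_apply, br_comp0]
    ring
  have h12 : M 1 2 = 0 := by
    rw [mapply, hD2, map_sub]
    simp only [Pi.sub_apply, br_comp1]
    ring
  have h32 : M 3 2 = 0 := by
    rw [mapply, hD2, map_sub]
    simp only [Pi.sub_apply, br_comp3]
    ring
  have h22 : M 2 2 = M 0 0 + M 1 1 := by
    rw [mapply, mapply, mapply, hD2, map_sub]
    simp only [Pi.sub_apply, br_comp2, e00, e01, e10, e11]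
    ring
  have hb03 := D.apply_lie_eq_sub (rhBasis 0) (rhBasis 3)
  rw [br_basis03, map_zero] at hb03
  have hb13 := D.apply_lie_eq_sub (rhBasis 1) (rhBasis 3)
  rw [br_basis13, map_zero] at hb13
  have h13 : M 1 3 = 0 := by
    have h := congrArg (fun z => rhEquiv z 2) hb03.symm
    simp only [map_sub, Pi.sub_apply, br_comp2, map_zero, Pi.zero_apply, e00, e01, e30, e31] at h
    rw [mapply]
    linarith [h]
  have h03 : M 0 3 = 0 := by
    have h := congrArg (fun z => rhEquiv z 2) hb13.symm
    simp only [map_sub, Pi.sub_apply, br_comp2, map_zero, Pi.zero_apply, e10, e11, e30, e31] at h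
    rw [mapply]
    linarith [h]
  refine ⟨M 0 0 + M 1 1, M 3 3, M 0 0 * M 1 1 - M 0 1 * M 1 0, ?_⟩
  rw [← LinearMap.charpoly_toMatrix D.toLinearMap rhBasis, ← hMdef,
    charpoly4' M h02 h12 h32 h22 h03 h13]

lemma RH3.add_fst (p q : RH3) : (p + q).1 = p.1 + q.1 := rfl
lemma RH3.add_snd (p q : RH3) : (p + q).2 = p.2 + q.2 := rfl
lemma RH3.sub_fst (p q : RH3) : (p - q).1 = p.1 - q.1 := rfl
lemma RH3.sub_snd (p q : RH3) : (p - q).2 = p.2 - q.2 := rfl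
lemma RH3.smul_fst (r : ℝ) (p : RH3) : (r • p).1 = r • p.1 := rfl
lemma RH3.smul_snd (r : ℝ) (p : RH3) : (r • p).2 = r • p.2 := rfl

lemma H3.sub_apply (x y : H3) (i : Fin 3) : (x - y) i = x i - y i := rfl
lemma H3.bracket_apply (x y : H3) : ⁅x, y⁆ = ![0, 0, x 0 * y 1 - x 1 * y 0] := rfl
lemma RH3.bracket_def (x y : RH3) : ⁅x, y⁆ = (⁅x.1, y.1⁆, (0:ℝ)) := rfl

noncomputable def diagMap (α β u : ℝ) : RH3 →ₗ[ℝ] RH3 where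
  toFun p := ((![α * p.1 0, β * p.1 1, (α + β) * p.1 2] : H3), u * p.2)
  map_add' p q := by
    refine Prod.ext ?_ ?_
    · funext i
      fin_cases i <;> simp [RH3.add_fst, H3.add_apply] <;> erw [RH3.add_fst, H3.add_apply] <;> simp <;> ring
    · show u * (p.2 + q.2) = u * p.2 + u * q.2
      ring
  map_smul' r p := by
    refine Prod.ext ?_ ?_
    · funext i
      fin_cases i <;> simp [RH3.smul_fst, H3.smul_apply] <;> erw [RH3.smul_fst, H3.smul_apply] <;> simp <;> ring
    · show u * (r * p.2) = r * (u * p.2)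
      ring

lemma diagMap_apply (α β u : ℝ) (p : RH3) :
    diagMap α β u p = ((![α * p.1 0, β * p.1 1, (α + β) * p.1 2] : H3), u * p.2) := rfl

noncomputable def diagDer (α β u : ℝ) : LieDerivation ℝ RH3 RH3 :=
  { toLinearMap := diagMap α β u
    leibniz' := by
      intro a b
      show diagMap α β u ⁅a, b⁆ = ⁅a, diagMap α β u b⁆ - ⁅b, diagMap α β u a⁆
      rw [RH3.bracket_def, RH3.bracket_def, RH3.bracket_def, diagMap_apply]
      refine Prod.ext ?_ ?_
      · show (![_, _, _] : H3) = _
        funext i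
        rw [H3.bracket_apply a.1 b.1]
        fin_cases i <;>
          simp [RH3.sub_fst, H3.sub_apply, H3.bracket_apply, diagMap_apply] <;>
            erw [RH3.sub_fst, H3.sub_apply, H3.bracket_apply, H3.bracket_apply] <;> simp <;> ring
      · show u * (0:ℝ) = 0 - 0
        ring }

lemma rhEquiv_diagMap0 (α β u : ℝ) (p : RH3) :
    rhEquiv (diagMap α β u p) 0 = α * rhEquiv p 0 := rfl
lemma rhEquiv_diagMap1 (α β u : ℝ) (p : RH3) :
    rhEquiv (diagMap α β u p) 1 = β * rhEquiv p 1 := rfl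
lemma rhEquiv_diagMap2 (α β u : ℝ) (p : RH3) :
    rhEquiv (diagMap α β u p) 2 = (α + β) * rhEquiv p 2 := rfl
lemma rhEquiv_diagMap3 (α β u : ℝ) (p : RH3) :
    rhEquiv (diagMap α β u p) 3 = u * rhEquiv p 3 := rfl

lemma diag_charpoly (α β u : ℝ) :
    LinearMap.charpoly (diagDer α β u).toLinearMap
      = (X - C (α + β)) * (X - C u) * (X ^ 2 - C (α + β) * X + C (α * β)) := by
  have hM : LinearMap.toMatrix rhBasis rhBasis (diagDer α β u).toLinearMap
      = Matrix.of ![![α,0,0,0],![0,β,0,0],![0,0,α+β,0],![0,0,0,u]] := by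
    ext i j
    rw [LinearMap.toMatrix_apply, rhBasis_repr]
    show rhEquiv (diagMap α β u (rhBasis j)) i = _
    fin_cases i <;> fin_cases j <;>
      simp [rhEquiv_diagMap0, rhEquiv_diagMap1, rhEquiv_diagMap2, rhEquiv_diagMap3,
        rhEquiv_basis, Fin.ext_iff] <;>
      norm_num [Matrix.vecHead, Matrix.vecTail] <;> omega
  rw [← LinearMap.charpoly_toMatrix _ rhBasis, hM, charpoly4]
  norm_num

lemma key_arith (μ lam t u n : ℝ) (hne : μ * lam ≠ 0)
    (hrange : (-1 < μ ∧ μ ≤ lam ∧ lam ≤ 1) ∨ (μ = -1 ∧ -1 ≤ lam ∧ lam < 0))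
    (H : ∀ x : ℝ, (x - t) * (x - u) * (x ^ 2 - t * x + n)
        = x * (x - 1) * (x - μ) * (x - lam)) :
    μ = -1 ∨ lam = μ ∨ lam = -μ ∨ lam = 1 ∨ lam = 1 - μ ∨ lam = 1 + μ := by
  have hμ : μ ≠ 0 := fun h => hne (by rw [h]; ring)
  have hlam : lam ≠ 0 := fun h => hne (by rw [h]; ring)
  have Hmu1 : μ = 1 → (μ = -1 ∨ lam = μ ∨ lam = -μ ∨ lam = 1 ∨ lam = 1 - μ ∨ lam = 1 + μ) := by
    intro h1
    rcases hrange with ⟨h, h2, h3⟩ | ⟨h, _⟩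
    · exact Or.inr (Or.inr (Or.inr (Or.inl (le_antisymm h3 (h1 ▸ h2)))))
    · exact absurd (h1 ▸ h) (by norm_num)
  have Hlamneg1 : lam = -1 → (μ = -1 ∨ lam = μ ∨ lam = -μ ∨ lam = 1 ∨ lam = 1 - μ ∨ lam = 1 + μ) := by
    intro h1
    rcases hrange with ⟨h, h2, h3⟩ | ⟨h, _⟩
    · linarith
    · exact Or.inl h
  have Hlammu1 : lam = μ - 1 → (μ = -1 ∨ lam = μ ∨ lam = -μ ∨ lam = 1 ∨ lam = 1 - μ ∨ lam = 1 + μ) := by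
    intro h1
    rcases hrange with ⟨h, h2, h3⟩ | ⟨h, _⟩
    · linarith
    · exact Or.inl h
  have E0 : t * (u * n) = 0 := by linear_combination H 0
  rcases mul_eq_zero.mp E0 with ht | hun
  · -- t = 0
    subst ht
    have h2 : (μ - u) * (μ ^ 2 + n) = 0 := by
      rcases mul_eq_zero.mp (show μ * ((μ - u) * (μ ^ 2 + n)) = 0 by linear_combination H μ)
        with h | h
      · exact absurd h hμ
      · exact h
    have h3 : (lam - u) * (lam ^ 2 + n) = 0 := by
      rcases mul_eq_zero.mp (show lam * ((lam - u) * (lam ^ 2 + n)) = 0 by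
        linear_combination H lam) with h | h
      · exact absurd h hlam
      · exact h
    have h4 : (1 - u) * (1 + n) = 0 := by linear_combination H 1
    rcases mul_eq_zero.mp h2 with hA | hA
    · rcases mul_eq_zero.mp h3 with hB | hB
      · exact Or.inr (Or.inl (by linarith))
      · rcases mul_eq_zero.mp h4 with hC | hC
        · exact Hmu1 (by linarith)
        · rcases mul_eq_zero.mp (show (lam - 1) * (lam + 1) = 0 by linear_combination hB - hC)
            with h | h
          · exact Or.inr (Or.inr (Or.inr (Or.inl (by linarith))))
          · exact Hlamneg1 (by linarith)
    · rcases mul_eq_zero.mp h3 with hB | hB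
      · rcases mul_eq_zero.mp h4 with hC | hC
        · exact Or.inr (Or.inr (Or.inr (Or.inl (by linarith))))
        · rcases mul_eq_zero.mp (show (μ - 1) * (μ + 1) = 0 by linear_combination hA - hC)
            with h | h
          · exact Hmu1 (by linarith)
          · exact Or.inl (by linarith)
      · rcases mul_eq_zero.mp (show (lam - μ) * (lam + μ) = 0 by linear_combination hB - hA)
          with h | h
        · exact Or.inr (Or.inl (by linarith))
        · exact Or.inr (Or.inr (Or.inl (by linarith)))
  rcases mul_eq_zero.mp hun with hu | hn
  · -- u = 0
    subst hu
    have h2 : (μ - t) * (μ ^ 2 - t * μ + n) = 0 := by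
      rcases mul_eq_zero.mp (show μ * ((μ - t) * (μ ^ 2 - t * μ + n)) = 0 by
        linear_combination H μ) with h | h
      · exact absurd h hμ
      · exact h
    have h3 : (lam - t) * (lam ^ 2 - t * lam + n) = 0 := by
      rcases mul_eq_zero.mp (show lam * ((lam - t) * (lam ^ 2 - t * lam + n)) = 0 by
        linear_combination H lam) with h | h
      · exact absurd h hlam
      · exact h
    have h4 : (1 - t) * (1 - t + n) = 0 := by linear_combination H 1
    rcases mul_eq_zero.mp h4 with hC | hC
    · -- t = 1
      have ht1 : t = 1 := by linarith
      subst ht1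
      rcases mul_eq_zero.mp h2 with hA | hA
      · exact Hmu1 (by linarith)
      · rcases mul_eq_zero.mp h3 with hB | hB
        · exact Or.inr (Or.inr (Or.inr (Or.inl (by linarith))))
        · rcases mul_eq_zero.mp (show (lam - μ) * (lam + μ - 1) = 0 by
            linear_combination hB - hA) with h | h
          · exact Or.inr (Or.inl (by linarith))
          · exact Or.inr (Or.inr (Or.inr (Or.inr (Or.inl (by linarith)))))
    · -- n = t - 1
      rcases mul_eq_zero.mp h2 with hA | hA
      · -- t = μ
        rcases mul_eq_zero.mp h3 with hB | hB
        · exact Or.inr (Or.inl (by linarith))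
        · rcases mul_eq_zero.mp (show (lam - 1) * (lam - μ + 1) = 0 by
            linear_combination hB - lam * hA + hA - hC) with h | h
          · exact Or.inr (Or.inr (Or.inr (Or.inl (by linarith))))
          · exact Hlammu1 (by linarith)
      · rcases mul_eq_zero.mp (show (μ - 1) * (μ + 1 - t) = 0 by
          linear_combination hA - hC) with h | h
        · exact Hmu1 (by linarith)
        · -- t = μ + 1
          rcases mul_eq_zero.mp h3 with hB | hB
          · exact Or.inr (Or.inr (Or.inr (Or.inr (Or.inr (by linarith)))))
          · rcases mul_eq_zero.mp (show (lam - 1) * (lam - μ) = 0 by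
              linear_combination hB - lam * h + h - hC) with h' | h'
            · exact Or.inr (Or.inr (Or.inr (Or.inl (by linarith))))
            · exact Or.inr (Or.inl (by linarith))
  · -- n = 0
    subst hn
    have h2 : (μ - t) * ((μ - t) * (μ - u)) = 0 := by
      rcases mul_eq_zero.mp (show μ * ((μ - t) * ((μ - t) * (μ - u))) = 0 by
        linear_combination H μ) with h | h
      · exact absurd h hμ
      · exact h
    have h3 : (lam - t) * ((lam - t) * (lam - u)) = 0 := by
      rcases mul_eq_zero.mp (show lam * ((lam - t) * ((lam - t) * (lam - u))) = 0 by
        linear_combination H lam) with h | h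
      · exact absurd h hlam
      · exact h
    have h4 : (1 - t) * ((1 - t) * (1 - u)) = 0 := by linear_combination H 1
    have h2' : μ - t = 0 ∨ μ - u = 0 := by
      rcases mul_eq_zero.mp h2 with h | h
      · exact Or.inl h
      · exact (mul_eq_zero.mp h).imp id id
    have h3' : lam - t = 0 ∨ lam - u = 0 := by
      rcases mul_eq_zero.mp h3 with h | h
      · exact Or.inl h
      · exact (mul_eq_zero.mp h).imp id id
    have h4' : 1 - t = 0 ∨ 1 - u = 0 := by
      rcases mul_eq_zero.mp h4 with h | h
      · exact Or.inl h
      · exact (mul_eq_zero.mp h).imp id id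
    rcases h4' with hC | hC
    · rcases h2' with hA | hA
      · exact Hmu1 (by linarith)
      · rcases h3' with hB | hB
        · exact Or.inr (Or.inr (Or.inr (Or.inl (by linarith))))
        · exact Or.inr (Or.inl (by linarith))
    · rcases h2' with hA | hA
      · rcases h3' with hB | hB
        · exact Or.inr (Or.inl (by linarith))
        · exact Or.inr (Or.inr (Or.inr (Or.inl (by linarith))))
      · exact Hmu1 (by linarith)

/-- For `μλ ≠ 0` with either `-1 < μ ≤ λ ≤ 1` or `μ = -1 ∧ -1 ≤ λ < 0`, there exists a
derivation of `rh₃ = h₃ × ℝ` with characteristic polynomial `X * (X - 1) * (X - μ) * (X - λ)`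
if and only if `μ = -1`, `λ = μ`, `λ = -μ`, `λ = 1`, `λ = 1 - μ` or `λ = 1 + μ`. -/
theorem charpoly_derivation_rh3_r4_mu_lambda_iff (μ lam : ℝ) (hne : μ * lam ≠ 0)
    (hrange : (-1 < μ ∧ μ ≤ lam ∧ lam ≤ 1) ∨ (μ = -1 ∧ -1 ≤ lam ∧ lam < 0)) :
    (∃ D : LieDerivation ℝ RH3 RH3,
        LinearMap.charpoly D.toLinearMap = X * (X - 1) * (X - C μ) * (X - C lam)) ↔
      (μ = -1 ∨ lam = μ ∨ lam = -μ ∨ lam = 1 ∨ lam = 1 - μ ∨ lam = 1 + μ) := by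
  constructor
  · rintro ⟨D, hD⟩
    obtain ⟨t, u, n, hc⟩ := derivation_charpoly D
    have hP : (X - C t) * (X - C u) * (X ^ 2 - C t * X + C n)
        = X * (X - 1) * (X - C μ) * (X - C lam) := by rw [← hc, hD]
    have H : ∀ x : ℝ, (x - t) * (x - u) * (x ^ 2 - t * x + n)
        = x * (x - 1) * (x - μ) * (x - lam) := by
      intro x
      have h := congrArg (eval x) hP
      simpa using h
    exact key_arith μ lam t u n hne hrange H
  · rintro (h | h | h | h | h | h)
    · exact ⟨diagDer 1 μ lam, by
        rw [diag_charpoly]; subst h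
        simp only [C_add, C_sub, C_neg, C_mul, C_1, C_0, map_one]; ring⟩
    · exact ⟨diagDer 0 μ 1, by
        rw [diag_charpoly]; subst h
        simp only [C_add, C_sub, C_neg, C_mul, C_1, C_0, map_one]; ring⟩
    · exact ⟨diagDer μ lam 1, by
        rw [diag_charpoly]; subst h
        simp only [C_add, C_sub, C_neg, C_mul, C_1, C_0, map_one]; ring⟩
    · exact ⟨diagDer 0 1 μ, by
        rw [diag_charpoly]; subst h
        simp only [C_add, C_sub, C_neg, C_mul, C_1, C_0, map_one]; ring⟩
    · exact ⟨diagDer μ lam 0, by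
        rw [diag_charpoly]; subst h
        simp only [C_add, C_sub, C_neg, C_mul, C_1, C_0, map_one]; ring⟩
    · exact ⟨diagDer 1 μ 0, by
        rw [diag_charpoly]; subst h
        simp only [C_add, C_sub, C_neg, C_mul, C_1, C_0, map_one]; ring⟩
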